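/- For every natural number n, parameters u_ℓ = (θ_ℓ, φ_ℓ, λ_ℓ) ∈ ℝ³ for ℓ = 0,…,n−1, every coin value k ∈ ZMod 2, and all n-bit strings J' and J, the matrix entry of the walk operator satisfies: U_{(k,J'),(0,J)} = 0 if k ≠ I_{n−1}, and U_{(k,J'),(0,J)} = ∏_{ℓ=0}^{n−1} [U3(u_ℓ)]_{I_ℓ, I_{ℓ−1}} if k = I_{n−1}, where I := J' ⊕ J and the convention I_{−1} = 0 is used. -/

import Mathlib

/-- The single-qubit rotation gate `U3(θ,φ,λ)`, indexed by `ZMod 2`. -/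
noncomputable def U3 (θ φ lam : ℝ) : Matrix (ZMod 2) (ZMod 2) ℂ :=
  Matrix.of fun μ ν =>
    if μ = 0 then
      (if ν = 0 then (Real.cos (θ / 2) : ℂ)
       else -Complex.exp (Complex.I * lam) * (Real.sin (θ / 2) : ℂ))
    else
      (if ν = 0 then Complex.exp (Complex.I * φ) * (Real.sin (θ / 2) : ℂ)
       else Complex.exp (Complex.I * (lam + φ)) * (Real.cos (θ / 2) : ℂ))

/-- Coin rotation: `U3` acting on the coin qubit, identity on the graph qubits. -/
noncomputable def coinR (n : ℕ) (u : ℝ × ℝ × ℝ) :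
    Matrix (ZMod 2 × (Fin n → ZMod 2)) (ZMod 2 × (Fin n → ZMod 2)) ℂ :=
  Matrix.of fun p q => if p.2 = q.2 then U3 u.1 u.2.1 u.2.2 p.1 q.1 else 0

/-- Controlled flip of the `k`-th graph qubit, controlled by the coin qubit. -/
def flipC (n : ℕ) (k : Fin n) :
    Matrix (ZMod 2 × (Fin n → ZMod 2)) (ZMod 2 × (Fin n → ZMod 2)) ℂ :=
  Matrix.of fun p q =>
    if p.1 = q.1 ∧ p.2 = q.2 + q.1 • (Pi.single k 1 : Fin n → ZMod 2) then 1 else 0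

/-- One quantum-walk evolution `U = W_{n-1} ⋯ W_1 W_0`, where `W_k = C_k · R_k`. -/
noncomputable def walkU (n : ℕ) (u : Fin n → ℝ × ℝ × ℝ) :
    Matrix (ZMod 2 × (Fin n → ZMod 2)) (ZMod 2 × (Fin n → ZMod 2)) ℂ :=
  ((List.finRange n).reverse.map (fun k => flipC n k * coinR n (u k))).prod

/-- The bit `I_{ℓ-1}` of an `n`-bit string, with the convention `I_{-1} = 0`. -/
def prevBit (n : ℕ) (I : Fin n → ZMod 2) (ℓ : Fin n) : ZMod 2 :=
  if 0 < (ℓ : ℕ) then I ⟨(ℓ : ℕ) - 1, lt_of_le_of_lt (Nat.sub_le _ _) ℓ.isLt⟩ else 0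

/-- The bit `I_{n-1}` of an `n`-bit string, with the convention `I_{-1} = 0` (for `n = 0`). -/
def lastBit (n : ℕ) (I : Fin n → ZMod 2) : ZMod 2 :=
  if h : 0 < n then I ⟨n - 1, Nat.sub_lt h Nat.one_pos⟩ else 0

lemma zmod2_add_self (a : ZMod 2) : a + a = 0 := by
  rw [← two_mul]
  have h2 : (2 : ZMod 2) = 0 := rfl
  rw [h2, zero_mul]

lemma zmod2_add_eq_zero_iff (a b : ZMod 2) : a + b = 0 ↔ a = b := by revert a b; decide

lemma add_self' {n : ℕ} (x : Fin n → ZMod 2) : x + x = 0 :=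
  funext fun i => zmod2_add_self (x i)

lemma W_apply (n : ℕ) (u : ℝ × ℝ × ℝ) (j : Fin n) (k c : ZMod 2) (J' K : Fin n → ZMod 2) :
    (flipC n j * coinR n u) (k, J') (c, K) =
      if K = J' + k • (Pi.single j 1 : Fin n → ZMod 2) then U3 u.1 u.2.1 u.2.2 k c else 0 := by
  rw [Matrix.mul_apply, Fintype.sum_prod_type]
  simp only [flipC, coinR, Matrix.of_apply, ite_mul, one_mul, zero_mul]
  have key : ∀ (c1 : ZMod 2) (K1 : Fin n → ZMod 2),
      ((k = c1 ∧ J' = K1 + c1 • (Pi.single j 1 : Fin n → ZMod 2)) ↔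
        (c1 = k ∧ K1 = J' + k • (Pi.single j 1 : Fin n → ZMod 2))) := by
    intro c1 K1
    constructor
    · rintro ⟨rfl, rfl⟩
      exact ⟨rfl, by rw [add_assoc, add_self', add_zero]⟩
    · rintro ⟨rfl, rfl⟩
      exact ⟨rfl, by rw [add_assoc, add_self', add_zero]⟩
  simp only [key]
  simp [Finset.sum_ite_eq', ite_and, Finset.sum_ite_eq]
  exact if_congr eq_comm rfl rfl

lemma partial_prod (n : ℕ) (u : Fin n → ℝ × ℝ × ℝ) (J : Fin n → ZMod 2) :
    ∀ (m : ℕ) (hm : m ≤ n) (k : ZMod 2) (J' : Fin n → ZMod 2),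
      ((((List.finRange n).take m).reverse.map
          (fun j => flipC n j * coinR n (u j))).prod) (k, J') (0, J)
      = if (∀ ℓ : Fin n, m ≤ (ℓ : ℕ) → (J' + J) ℓ = 0) ∧
            k = (if h : 0 < m then (J' + J) ⟨m - 1, Nat.lt_of_lt_of_le (Nat.sub_lt h Nat.one_pos) hm⟩ else 0) then
          ∏ ℓ ∈ Finset.univ.filter (fun ℓ : Fin n => (ℓ : ℕ) < m),
            U3 (u ℓ).1 (u ℓ).2.1 (u ℓ).2.2 ((J' + J) ℓ) (prevBit n (J' + J) ℓ)
        else 0 := by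
  intro m
  induction m with
  | zero =>
    intro _ k J'
    simp only [List.take_zero, List.reverse_nil, List.map_nil, List.prod_nil,
      Matrix.one_apply, Nat.zero_le, forall_true_left, dif_neg (lt_irrefl 0)]
    have h2 : (∀ ℓ : Fin n, (J' + J) ℓ = 0) ↔ J' = J := by
      constructor
      · intro h; funext i; exact (zmod2_add_eq_zero_iff _ _).mp (h i)
      · rintro rfl i; exact (zmod2_add_eq_zero_iff _ _).mpr rfl
    have h3 : Finset.univ.filter (fun ℓ : Fin n => (ℓ : ℕ) < 0) = ∅ := by
      simp
    rw [h3, Finset.prod_empty]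
    by_cases h : k = 0 ∧ J' = J
    · rw [if_pos, if_pos ⟨h2.mpr h.2, h.1⟩]
      exact Prod.ext h.1 h.2
    · rw [if_neg, if_neg]
      · intro hc; exact h ⟨hc.2, h2.mp hc.1⟩
      · intro hc; exact h ⟨congrArg Prod.fst hc, congrArg Prod.snd hc⟩
  | succ m ih =>
    intro hm k J'
    have hmn : m < n := hm
    have ihm := ih (le_of_lt hmn)
    set j : Fin n := ⟨m, hmn⟩ with hj
    have htake : (List.finRange n).take (m+1) = (List.finRange n).take m ++ [j] := by
      rw [List.take_succ]
      congr 1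
      rw [List.getElem?_eq_getElem (by simpa using hmn)]
      simp [hj]
    rw [htake, List.reverse_append, List.reverse_singleton, List.singleton_append,
      List.map_cons, List.prod_cons, Matrix.mul_apply, Fintype.sum_prod_type]
    simp only [W_apply, ite_mul, zero_mul]
    simp only [Finset.sum_ite_eq', Finset.mem_univ, if_true]
    simp only [ihm, mul_ite, mul_zero]
    set X : Fin n → ZMod 2 := J' + k • (Pi.single j 1 : Fin n → ZMod 2) with hX
    have hXJ : ∀ ℓ : Fin n, (X + J) ℓ = (J' + J) ℓ + (if ℓ = j then k else 0) := by
      intro ℓ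
      by_cases hl : ℓ = j <;>
        simp [hX, Pi.single_apply, hl, smul_eq_mul] <;> ring
    have hjne : ∀ ℓ : Fin n, (ℓ : ℕ) ≠ m → (X + J) ℓ = (J' + J) ℓ := by
      intro ℓ hℓ
      rw [hXJ, if_neg, add_zero]
      intro he; exact hℓ (by rw [he])
    by_cases hc : (∀ ℓ : Fin n, m + 1 ≤ (ℓ : ℕ) → (J' + J) ℓ = 0) ∧ k = (J' + J) j
    · -- main case
      have h1 : ∀ ℓ : Fin n, m ≤ (ℓ : ℕ) → (X + J) ℓ = 0 := by
        intro ℓ hl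
        by_cases he : ℓ = j
        · rw [hXJ, if_pos he, he, ← hc.2, zmod2_add_self]
        · have hne : (ℓ : ℕ) ≠ m := fun h => he (Fin.ext h)
          rw [hjne ℓ hne]
          exact hc.1 ℓ (by omega)
      have hprev : (if h : 0 < m then
          (X + J) ⟨m - 1, Nat.lt_of_lt_of_le (Nat.sub_lt h Nat.one_pos) (le_of_lt hmn)⟩ else 0)
          = prevBit n (J' + J) j := by
        unfold prevBit
        by_cases h0 : 0 < m
        · rw [dif_pos h0, if_pos (show 0 < (j : ℕ) from h0)]
          exact hjne _ (by simp; omega)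
        · rw [dif_neg h0, if_neg (show ¬ 0 < (j : ℕ) from h0)]
      rw [Finset.sum_eq_single (prevBit n (J' + J) j)]
      · rw [if_pos ⟨h1, hprev.symm⟩]
        rw [dif_pos (Nat.succ_pos m), if_pos]
        · have hins : Finset.univ.filter (fun ℓ : Fin n => (ℓ : ℕ) < m + 1)
              = insert j (Finset.univ.filter (fun ℓ : Fin n => (ℓ : ℕ) < m)) := by
            ext ℓ
            simp [Finset.mem_insert, Fin.ext_iff, hj]
            omega
          rw [hins, Finset.prod_insert (by simp [hj])]
          congr 1
          · rw [hc.2]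
          · apply Finset.prod_congr rfl
            intro ℓ hℓ
            simp only [Finset.mem_filter] at hℓ
            have hne : (ℓ : ℕ) ≠ m := by omega
            rw [hjne ℓ hne]
            congr 1
            unfold prevBit
            by_cases h0 : 0 < (ℓ : ℕ)
            · rw [if_pos h0, if_pos h0]
              exact hjne _ (by simp; omega)
            · rw [if_neg h0, if_neg h0]
        · exact ⟨hc.1, hc.2⟩
      · intro b _ hb
        rw [if_neg]
        intro hC
        exact hb (hC.2.trans hprev)
      · intro h; exact absurd (Finset.mem_univ _) h
    · -- degenerate case
      have hnot : ∀ x : ZMod 2, ¬ ((∀ ℓ : Fin n, m ≤ (ℓ : ℕ) → (X + J) ℓ = 0) ∧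
          x = (if h : 0 < m then
            (X + J) ⟨m - 1, Nat.lt_of_lt_of_le (Nat.sub_lt h Nat.one_pos) (le_of_lt hmn)⟩ else 0)) := by
        intro x hC
        apply hc
        constructor
        · intro ℓ hℓ
          have hne : (ℓ : ℕ) ≠ m := by omega
          rw [← hjne ℓ hne]
          exact hC.1 ℓ (by omega)
        · have := hC.1 j (le_refl m)
          rw [hXJ, if_pos rfl] at this
          exact ((zmod2_add_eq_zero_iff _ _).mp this).symm
      rw [Finset.sum_eq_zero (fun x _ => if_neg (hnot x)), if_neg]
      intro hC
      apply hc
      refine ⟨hC.1, ?_⟩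
      have h2 := hC.2
      rw [dif_pos (Nat.succ_pos m)] at h2
      exact h2

theorem stmt_9 (n : ℕ) (u : Fin n → ℝ × ℝ × ℝ) (k : ZMod 2) (J' J : Fin n → ZMod 2) :
    walkU n u (k, J') (0, J) =
      if k = lastBit n (J' + J) then
        ∏ ℓ : Fin n,
          U3 (u ℓ).1 (u ℓ).2.1 (u ℓ).2.2 ((J' + J) ℓ) (prevBit n (J' + J) ℓ)
      else 0 := by
  have h := partial_prod n u J n le_rfl k J'
  rw [show (List.finRange n).take n = List.finRange n from
    List.take_of_length_le (by simp)] at h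
  rw [walkU, h]
  have hfilt : Finset.univ.filter (fun ℓ : Fin n => (ℓ : ℕ) < n) = Finset.univ := by
    ext ℓ; simp [ℓ.isLt]
  rw [hfilt]
  have hvac : (∀ ℓ : Fin n, n ≤ (ℓ : ℕ) → (J' + J) ℓ = 0) :=
    fun ℓ h' => absurd ℓ.isLt (by omega)
  by_cases hk : k = lastBit n (J' + J)
  · rw [if_pos hk]
    rw [if_pos]
    exact ⟨hvac, hk⟩
  · rw [if_neg, if_neg hk]
    intro hC
    exact hk hC.2
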